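/- Let d ≥ 3, let 1 ≤ p ≤ 8/7, and let f ∈ L^p(ℝ^d). Set h := f ∗ f̃, where f̃(x) = \overline{f(−x)}, so that ĥ = |f̂|². Let χ be a nonnegative Schwartz function on ℝ^d with χ(y) ≥ 1 for |y| ≤ 1. Then for every ω ∈ S^{d-1} one has the pointwise bound 𝓜⁺f(ω) ≤ C (𝓜h(ω))^{1/2}, where 𝓜⁺f(ω) := sup_{ε>0} ε^{-d} ∫_{|y|≤ε} |f̂(ω + y)| dy, 𝓜h(ω) := sup_{ε>0} |∫_{ℝ^d} ĥ(ω + y) χ_ε(y) dy|, and C depends only on d. -/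

import Mathlib

open MeasureTheory Metric Filter Complex
open scoped FourierTransform RealInnerProductSpace ENNReal NNReal SchwartzMap

noncomputable section

/-- The positive maximal Fourier restriction operator
`𝓜⁺f(ω) = sup_{ε>0} ε^{-d} ∫_{|y|≤ε} |f̂(ω+y)| dy`, applied to `F = f̂`. -/
def posMaxRestrict {d : ℕ} (F : EuclideanSpace ℝ (Fin d) → ℂ)
    (ω : sphere (0 : EuclideanSpace ℝ (Fin d)) 1) : ℝ≥0∞ :=
  ⨆ (ε : ℝ) (_ : 0 < ε),
    (∫⁻ y in closedBall (0 : EuclideanSpace ℝ (Fin d)) ε, ‖F (↑ω + y)‖₊) /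
      ENNReal.ofReal (ε ^ d)

/-- The maximal Fourier restriction operator `𝓜h(ω) = sup_{ε>0} |∫ ĥ(ω+y) χ_ε(y) dy|`
applied to `ĥ = |f̂|² = |F|²`, with `χ` a real-valued Schwartz function. -/
def maxRestrictSq {d : ℕ} (χ : 𝓢(EuclideanSpace ℝ (Fin d), ℝ))
    (F : EuclideanSpace ℝ (Fin d) → ℂ)
    (ω : sphere (0 : EuclideanSpace ℝ (Fin d)) 1) : ℝ≥0∞ :=
  ⨆ (ε : ℝ) (_ : 0 < ε),
    (‖∫ y, ‖F (↑ω + y)‖ ^ 2 * ((ε ^ d)⁻¹ * χ (ε⁻¹ • y))‖₊ : ℝ≥0∞)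

lemma schwartz_norm_rpow_integrable {d : ℕ} (χ : 𝓢(EuclideanSpace ℝ (Fin d), ℝ)) {t : ℝ}
    (ht : 1 ≤ t) :
    Integrable (fun x => ‖χ x‖ ^ t) (volume : Measure (EuclideanSpace ℝ (Fin d))) := by
  obtain ⟨M, hM⟩ := χ.decay 0 0
  simp only [pow_zero, one_mul, norm_iteratedFDeriv_zero] at hM
  set M' := max M 1 with hM'def
  have hM'1 : (1:ℝ) ≤ M' := le_max_right _ _
  have hbound : ∀ x, ‖χ x‖ ^ t ≤ M' ^ (t - 1) * ‖χ x‖ := by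
    intro x
    rcases eq_or_lt_of_le (norm_nonneg (χ x)) with h0 | h0
    · rw [← h0, Real.zero_rpow (by linarith)]
      positivity
    · have h1 : ‖χ x‖ ^ t = ‖χ x‖ ^ (t-1) * ‖χ x‖ := by
        rw [← Real.rpow_add_one (ne_of_gt h0)]
        ring_nf
      rw [h1]
      exact mul_le_mul_of_nonneg_right
        (Real.rpow_le_rpow (norm_nonneg _) ((hM.2 x).trans (le_max_left _ _)) (by linarith))
        (norm_nonneg _)
  refine ((χ.integrable.norm).const_mul (M' ^ (t-1))).mono' ?_ ?_
  · exact (χ.continuous.norm.rpow_const (fun x => Or.inr (by linarith))).aestronglyMeasurable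
  · refine ae_of_all _ fun x => ?_
    rw [Real.norm_eq_abs, _root_.abs_of_nonneg (Real.rpow_nonneg (norm_nonneg _) _)]
    exact hbound x

lemma schwartz_scaled_memℒp {d : ℕ} (χ : 𝓢(EuclideanSpace ℝ (Fin d), ℝ)) {q : ℝ≥0∞}
    (hq1 : 1 ≤ q) (hqtop : q ≠ ∞) {ε : ℝ} (hε : ε ≠ 0) :
    MemLp (fun y => χ (ε⁻¹ • y)) q (volume : Measure (EuclideanSpace ℝ (Fin d))) := by
  have hq0 : q ≠ 0 := by intro h; simp [h] at hq1
  have hcont : Continuous fun y : EuclideanSpace ℝ (Fin d) => χ (ε⁻¹ • y) :=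
    χ.continuous.comp (continuous_const_smul _)
  have ht : (1:ℝ) ≤ q.toReal := by
    have := ENNReal.toReal_mono hqtop hq1
    simpa using this
  have hint : Integrable (fun y : EuclideanSpace ℝ (Fin d) => ‖χ (ε⁻¹ • y)‖ ^ q.toReal) volume :=
    (integrable_comp_smul_iff volume
      (fun x : EuclideanSpace ℝ (Fin d) => ‖χ x‖ ^ q.toReal) (inv_ne_zero hε)).2
      (schwartz_norm_rpow_integrable χ ht)
  have h2 : MemLp (fun y : EuclideanSpace ℝ (Fin d) => ‖χ (ε⁻¹ • y)‖ ^ q.toReal) (q / q) volume := by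
    rw [ENNReal.div_self hq0 hqtop]
    exact memLp_one_iff_integrable.mpr hint
  exact (memLp_norm_rpow_iff hcont.aestronglyMeasurable hq0 hqtop).1 h2

lemma integrable_kernel {d : ℕ} {p : ℝ≥0∞} (hp2 : p ≤ 8/7)
    {F : EuclideanSpace ℝ (Fin d) → ℂ} (hF : MemLp F (1 - p⁻¹)⁻¹ volume)
    (χ : 𝓢(EuclideanSpace ℝ (Fin d), ℝ)) (ω : EuclideanSpace ℝ (Fin d)) {ε : ℝ} (hε : 0 < ε) :
    Integrable (fun y => ‖F (ω + y)‖ ^ 2 * ((ε ^ d)⁻¹ * χ (ε⁻¹ • y))) volume := by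
  set p' : ℝ≥0∞ := (1 - p⁻¹)⁻¹ with hp'def
  have h78 : (7/8 : ℝ≥0∞) ≤ p⁻¹ := by
    have h := ENNReal.inv_le_inv.2 hp2
    rwa [ENNReal.inv_div (Or.inr (by norm_num)) (Or.inr (by norm_num))] at h
  have hsub : 1 - p⁻¹ ≤ 1/8 := by
    rw [tsub_le_iff_right]
    calc (1:ℝ≥0∞) = 1/8 + 7/8 := by
          rw [ENNReal.div_add_div_same]
          norm_num
          rw [ENNReal.div_self] <;> norm_num
      _ ≤ 1/8 + p⁻¹ := add_le_add_right h78 _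
  have hp8 : (8:ℝ≥0∞) ≤ p' := by
    have h := ENNReal.inv_le_inv.2 hsub
    rwa [one_div, inv_inv] at h
  set r : ℝ≥0∞ := p' / 2 with hrdef
  have hr4 : (4:ℝ≥0∞) ≤ r := by
    rw [hrdef]
    calc (4:ℝ≥0∞) = 8/2 := by
          rw [ENNReal.eq_div_iff (by norm_num) (by norm_num)]
          norm_num
      _ ≤ p'/2 := ENNReal.div_le_div_right hp8 2
  have hr1 : (1:ℝ≥0∞) < r := lt_of_lt_of_le (by norm_num) hr4
  have hrinv : r⁻¹ ≤ 1 := ENNReal.inv_le_one.2 hr1.le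
  have hrinvlt : r⁻¹ < 1 := ENNReal.inv_lt_one.2 hr1
  set q : ℝ≥0∞ := (1 - r⁻¹)⁻¹ with hqdef
  have hqtop : q ≠ ∞ := by
    rw [hqdef, Ne, ENNReal.inv_eq_top]
    exact (tsub_pos_iff_lt.2 hrinvlt).ne'
  have hq1 : 1 ≤ q := by
    rw [hqdef]
    rw [ENNReal.one_le_inv]  -- maybe wrong name; fallback below
    exact tsub_le_self
  have hpqr : 1/(1:ℝ≥0∞) = 1/q + 1/r := by
    rw [one_div, one_div, one_div, inv_one, hqdef, inv_inv, tsub_add_cancel_of_le hrinv]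
  have hG : MemLp (fun y => F (ω + y)) p' volume :=
    hF.comp_measurePreserving (measurePreserving_add_left volume ω)
  have hu : MemLp (fun y => ‖F (ω + y)‖ ^ 2) r volume := by
    have h := hG.norm_rpow_div 2
    have h2 : ((2:ℝ≥0∞)).toReal = ((2:ℕ):ℝ) := by simp
    rw [h2] at h
    simpa only [Real.rpow_natCast] using h
  have hφ : MemLp (fun y : EuclideanSpace ℝ (Fin d) => χ (ε⁻¹ • y)) q volume :=
    schwartz_scaled_memℒp χ hq1 hqtop hε.ne'
  have hmul : MemLp ((fun y : EuclideanSpace ℝ (Fin d) => χ (ε⁻¹ • y)) •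
      (fun y => ‖F (ω + y)‖ ^ 2)) 1 volume := hu.smul hφ (hpqr := ⟨by simpa [one_div] using hpqr.symm⟩)
  have hint : Integrable (fun y => χ (ε⁻¹ • y) * ‖F (ω + y)‖ ^ 2) volume := by
    have := memLp_one_iff_integrable.1 hmul
    simpa [Pi.smul_apply, smul_eq_mul, Pi.mul_def] using this
  refine (hint.const_mul ((ε^d)⁻¹)).congr (ae_of_all _ fun y => ?_)
  ring

/-- **Pointwise domination of the positive maximal operator** (from the proof of
Proposition 6): for `d ≥ 3`, `1 ≤ p ≤ 8/7`, `f ∈ L^p(ℝ^d)` with Fourier transform `F = f̂`,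
`h = f ∗ f̃` (so that `ĥ = |f̂|²`), and `χ` a nonnegative Schwartz function with `χ(y) ≥ 1`
for `|y| ≤ 1`, one has `𝓜⁺f(ω) ≤ C (𝓜h(ω))^{1/2}` for every `ω ∈ S^{d-1}`, with `C`
depending only on `d`. -/
theorem pos_max_le_sqrt_max (d : ℕ) (hd : 3 ≤ d) :
    ∃ C : ℝ≥0, ∀ p : ℝ≥0∞, 1 ≤ p → p ≤ 8 / 7 →
      ∀ f F : EuclideanSpace ℝ (Fin d) → ℂ,
        MemLp f p volume → MemLp F (1 - p⁻¹)⁻¹ volume →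
        (∀ φ : 𝓢(EuclideanSpace ℝ (Fin d), ℂ), ∫ ξ, F ξ * φ ξ = ∫ x, f x * 𝓕 (⇑φ) x) →
      ∀ χ : 𝓢(EuclideanSpace ℝ (Fin d), ℝ),
        (∀ y, 0 ≤ χ y) → (∀ y : EuclideanSpace ℝ (Fin d), ‖y‖ ≤ 1 → 1 ≤ χ y) →
      ∀ ω : sphere (0 : EuclideanSpace ℝ (Fin d)) 1,
        posMaxRestrict F ω ≤ C * maxRestrictSq χ F ω ^ (1 / 2 : ℝ) := by
  set K : ℝ≥0∞ := volume (ball (0 : EuclideanSpace ℝ (Fin d)) 1) with hKdef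
  have hKtop : K ≠ ∞ := measure_ball_lt_top.ne
  refine ⟨K.toNNReal ^ ((1:ℝ)/2), ?_⟩
  intro p hp1 hp2 f F hf hF hFT χ hχ0 hχ1 ω
  have hCcoe : ((K.toNNReal ^ ((1:ℝ)/2) : ℝ≥0) : ℝ≥0∞) = K ^ ((1:ℝ)/2) := by
    rw [ENNReal.coe_rpow_of_nonneg _ (by norm_num), ENNReal.coe_toNNReal hKtop]
  set M : ℝ≥0∞ := maxRestrictSq χ F ω with hMdef
  rw [posMaxRestrict]
  refine iSup₂_le fun ε hε => ?_
  set c : ℝ≥0∞ := ENNReal.ofReal (ε ^ d) with hcdef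
  have hεd : (0:ℝ) < ε ^ d := by positivity
  have hc0 : c ≠ 0 := by
    rw [hcdef, Ne, ENNReal.ofReal_eq_zero, not_le]; exact hεd
  have hctop : c ≠ ∞ := ENNReal.ofReal_ne_top
  set G : EuclideanSpace ℝ (Fin d) → ℂ := fun y => F (↑ω + y) with hGdef
  have hGm : AEStronglyMeasurable G volume := by
    have := (hF.comp_measurePreserving (measurePreserving_add_left volume
      ((ω : EuclideanSpace ℝ (Fin d))))).1
    simpa [Function.comp_def] using this
  -- Cauchy-Schwarz
  have hCS : (∫⁻ y in closedBall (0 : EuclideanSpace ℝ (Fin d)) ε, (‖G y‖₊ : ℝ≥0∞)) ≤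
      (∫⁻ y in closedBall (0 : EuclideanSpace ℝ (Fin d)) ε, (‖G y‖₊ : ℝ≥0∞) ^ 2) ^ ((1:ℝ)/2) *
        (volume (closedBall (0 : EuclideanSpace ℝ (Fin d)) ε)) ^ ((1:ℝ)/2) := by
    have h2 : Real.HolderConjugate 2 2 := Real.HolderConjugate.two_two
    have h := ENNReal.lintegral_mul_le_Lp_mul_Lq
      (volume.restrict (closedBall (0 : EuclideanSpace ℝ (Fin d)) ε)) h2
      (f := fun y => (‖G y‖₊ : ℝ≥0∞)) (g := fun _ => 1)
      hGm.enorm.restrict aemeasurable_const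
    simpa [Pi.mul_apply, mul_one, ENNReal.one_rpow, lintegral_one, Measure.restrict_apply,
      ENNReal.rpow_two] using h
  have hball : volume (closedBall (0 : EuclideanSpace ℝ (Fin d)) ε) = c * K := by
    rw [Measure.addHaar_closedBall _ _ hε.le, finrank_euclideanSpace_fin]
  -- pointwise domination on the ball
  set B : ℝ≥0∞ := ∫⁻ y, (‖G y‖₊ : ℝ≥0∞) ^ 2 * ENNReal.ofReal ((ε^d)⁻¹ * χ (ε⁻¹ • y)) with hBdef
  have hsq : (∫⁻ y in closedBall (0 : EuclideanSpace ℝ (Fin d)) ε, (‖G y‖₊ : ℝ≥0∞) ^ 2) ≤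
      c * B := by
    have step1 : (∫⁻ y in closedBall (0 : EuclideanSpace ℝ (Fin d)) ε, (‖G y‖₊ : ℝ≥0∞) ^ 2) ≤
        ∫⁻ y in closedBall (0 : EuclideanSpace ℝ (Fin d)) ε,
          (‖G y‖₊ : ℝ≥0∞) ^ 2 * (c * ENNReal.ofReal ((ε^d)⁻¹ * χ (ε⁻¹ • y))) := by
      refine lintegral_mono_ae ((ae_restrict_iff' measurableSet_closedBall).2
        (ae_of_all _ fun y hy => ?_))
      have hyy : ‖ε⁻¹ • y‖ ≤ 1 := by
        rw [norm_smul, Real.norm_eq_abs, abs_of_pos (inv_pos.2 hε)]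
        have hy' : ‖y‖ ≤ ε := mem_closedBall_zero_iff.1 hy
        calc ε⁻¹ * ‖y‖ ≤ ε⁻¹ * ε := by gcongr
          _ = 1 := inv_mul_cancel₀ hε.ne'
      have h1 : (1:ℝ≥0∞) ≤ c * ENNReal.ofReal ((ε^d)⁻¹ * χ (ε⁻¹ • y)) := by
        rw [hcdef, ← ENNReal.ofReal_mul hεd.le]
        have heq : ε ^ d * ((ε^d)⁻¹ * χ (ε⁻¹ • y)) = χ (ε⁻¹ • y) := by
          field_simp
        rw [heq]
        exact ENNReal.one_le_ofReal.2 (hχ1 _ hyy)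
      exact le_mul_of_one_le_right (zero_le) h1
    refine step1.trans ((setLIntegral_le_lintegral _ _).trans ?_)
    rw [← lintegral_const_mul' c _ hctop]
    refine le_of_eq (lintegral_congr fun y => ?_)
    ring
  -- identification with the Bochner integral
  set I : ℝ := ∫ y, ‖F (↑ω + y)‖ ^ 2 * ((ε ^ d)⁻¹ * χ (ε⁻¹ • y)) with hIdef
  have hint : Integrable (fun y => ‖F (↑ω + y)‖ ^ 2 * ((ε ^ d)⁻¹ * χ (ε⁻¹ • y))) volume :=
    integrable_kernel hp2 hF χ (↑ω) hε
  have hnn : 0 ≤ᵐ[volume] fun y => ‖F (↑ω + y)‖ ^ 2 * ((ε ^ d)⁻¹ * χ (ε⁻¹ • y)) :=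
    ae_of_all _ fun y => mul_nonneg (by positivity) (mul_nonneg (by positivity) (hχ0 _))
  have hBI : B = ENNReal.ofReal I := by
    rw [hIdef, ofReal_integral_eq_lintegral_ofReal hint hnn, hBdef]
    refine lintegral_congr fun y => Eq.symm ?_
    rw [ENNReal.ofReal_mul (show (0:ℝ) ≤ ‖F (↑ω + y)‖ ^ 2 by positivity)]
    congr 1
    rw [ENNReal.ofReal_pow (norm_nonneg _), ofReal_norm, enorm_eq_nnnorm]
  have hIM : ENNReal.ofReal I ≤ M := by
    refine le_trans ?_ (le_iSup₂ (f := fun (ε : ℝ) (_ : 0 < ε) =>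
      (‖∫ y, ‖F (↑ω + y)‖ ^ 2 * ((ε ^ d)⁻¹ * χ (ε⁻¹ • y))‖₊ : ℝ≥0∞)) ε hε)
    rw [← enorm_eq_nnnorm, ← ofReal_norm]
    exact ENNReal.ofReal_le_ofReal (le_abs_self I)
  have hBM : B ≤ M := hBI.le.trans (hBI ▸ (hBI ▸ hIM))
  -- put everything together
  have main : (∫⁻ y in closedBall (0 : EuclideanSpace ℝ (Fin d)) ε, (‖G y‖₊ : ℝ≥0∞)) / c ≤
      ((c * M) ^ ((1:ℝ)/2) * (c * K) ^ ((1:ℝ)/2)) / c := by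
    refine ENNReal.div_le_div_right (hCS.trans ?_) c
    rw [hball]
    refine mul_le_mul_left (ENNReal.rpow_le_rpow (hsq.trans ?_) (by norm_num)) _
    exact mul_le_mul_right hBM c
  refine main.trans (le_of_eq ?_)
  rw [ENNReal.mul_rpow_of_nonneg _ _ (by norm_num : (0:ℝ) ≤ 1/2),
    ENNReal.mul_rpow_of_nonneg c K (by norm_num : (0:ℝ) ≤ 1/2)]
  have hcc : c ^ ((1:ℝ)/2) * c ^ ((1:ℝ)/2) = c := by
    rw [← ENNReal.rpow_add _ _ hc0 hctop]
    norm_num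
  rw [mul_mul_mul_comm, hcc, mul_comm (M ^ ((1:ℝ)/2)), mul_comm c, mul_div_assoc,
    ENNReal.div_self hc0 hctop, mul_one, hCcoe]
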